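/- Assume the function x ↦ ∫_{x₁}^{x} (m₁ − z) π(z) dz is integrable on (x₁, x₂). Then ∫_{x₁}^{x₂} ( ∫_{x₁}^{x} (m₁ − z) π(z) dz ) dx = m₂ − m₁². Consequently, the π-weighted average of the optimal variance function σ²(x)/2 = (λ₁/π(x)) ∫_{x₁}^{x} (m₁ − z) π(z) dz, with λ₁ = σ̂²/(2(m₂ − m₁²)), equals σ̂²/2: ∫_{x₁}^{x₂} (σ²(x)/2) π(x) dx = σ̂²/2. -/

import Mathlib

open MeasureTheory Set Filter
open Function


lemma left_half (f : ℝ → ℝ) (hf : Integrable f) (hzf : Integrable fun z => z * f z) :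
    ∫ x in Set.Iio (0:ℝ), (∫ z in Set.Iio x, f z) = ∫ z, max (-z) 0 * f z := by
  set F : ℝ → ℝ → ℝ := fun x z => (Set.Ioo z (0:ℝ)).indicator (fun _ => f z) x with hF
  have hset : MeasurableSet {p : ℝ × ℝ | p.2 < p.1 ∧ p.1 < 0} := by
    exact (measurableSet_lt measurable_snd measurable_fst).inter
      (measurableSet_lt measurable_fst measurable_const)
  have huncurry : uncurry F = Set.indicator {p : ℝ × ℝ | p.2 < p.1 ∧ p.1 < 0}
      (fun p => f p.2) := by
    funext p
    simp only [uncurry, hF, Set.indicator, Set.mem_Ioo, Set.mem_setOf_eq]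
  have hmeas : AEStronglyMeasurable (uncurry F) (volume.prod volume) := by
    rw [huncurry]
    exact (hf.aestronglyMeasurable.comp_snd).indicator hset
  have hvol : ∀ z : ℝ, (volume (Set.Ioo z (0:ℝ))).toReal = max (-z) 0 := by
    intro z
    rw [Real.volume_Ioo, ENNReal.toReal_ofReal', zero_sub]
  have hFint : Integrable (uncurry F) (volume.prod volume) := by
    rw [integrable_prod_iff' hmeas]
    constructor
    · refine Filter.Eventually.of_forall fun z => ?_
      have : (fun x => uncurry F (x, z)) = (Set.Ioo z (0:ℝ)).indicator (fun _ => f z) := rfl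
      rw [this, integrable_indicator_iff measurableSet_Ioo]
      exact integrableOn_const measure_Ioo_lt_top.ne
    · have heq : (fun z => ∫ x, ‖uncurry F (x, z)‖) = fun z => max (-z) 0 * ‖f z‖ := by
        funext z
        have : (fun x => ‖uncurry F (x, z)‖)
            = (Set.Ioo z (0:ℝ)).indicator (fun _ => ‖f z‖) := by
          funext x
          simp only [uncurry, hF, Set.indicator]
          split <;> simp
        rw [this, integral_indicator_const _ measurableSet_Ioo, measureReal_def, hvol, smul_eq_mul]
      rw [heq]
      refine hzf.norm.mono ?_ ?_
      · exact ((measurable_neg.max measurable_const).aestronglyMeasurable.mul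
          hf.norm.aestronglyMeasurable)
      · refine Filter.Eventually.of_forall fun z => ?_
        simp only [Real.norm_eq_abs, abs_mul, abs_abs]
        have h1 : |max (-z) 0| ≤ |z| := by
          rcases le_total z 0 with h | h
          · rw [max_eq_left (by linarith)]; simp
          · rw [max_eq_right (by linarith)]; simp [abs_nonneg]
        exact mul_le_mul_of_nonneg_right h1 (abs_nonneg _)
  have hswap := integral_integral_swap hFint
  -- LHS
  have hL : (∫ x, ∫ z, F x z) = ∫ x in Set.Iio (0:ℝ), (∫ z in Set.Iio x, f z) := by
    rw [← integral_indicator measurableSet_Iio]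
    congr 1
    funext x
    by_cases hx : x < 0
    · rw [Set.indicator_of_mem (Set.mem_Iio.2 hx), ← integral_indicator measurableSet_Iio]
      congr 1
      funext z
      simp only [hF, Set.indicator, Set.mem_Ioo, Set.mem_Iio, hx, and_true]
    · rw [Set.indicator_of_notMem (fun h => hx (Set.mem_Iio.1 h))]
      have : (fun z => F x z) = fun _ => (0:ℝ) := by
        funext z
        simp only [hF, Set.indicator, Set.mem_Ioo]
        simp [hx]
      rw [this, integral_zero]
  have hR : (∫ z, ∫ x, F x z) = ∫ z, max (-z) 0 * f z := by
    congr 1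
    funext z
    rw [show (fun x => F x z) = (Set.Ioo z (0:ℝ)).indicator (fun _ => f z) from rfl,
      integral_indicator_const _ measurableSet_Ioo, measureReal_def, hvol, smul_eq_mul]
  rw [← hL, hswap, hR]


lemma right_half (f : ℝ → ℝ) (hf : Integrable f) (hzf : Integrable fun z => z * f z) :
    ∫ x in Set.Ici (0:ℝ), (∫ z in Set.Ici x, f z) = ∫ z, max z 0 * f z := by
  set F : ℝ → ℝ → ℝ := fun x z => (Set.Icc (0:ℝ) z).indicator (fun _ => f z) x with hF
  have hset : MeasurableSet {p : ℝ × ℝ | 0 ≤ p.1 ∧ p.1 ≤ p.2} := by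
    exact (measurableSet_le measurable_const measurable_fst).inter
      (measurableSet_le measurable_fst measurable_snd)
  have huncurry : uncurry F = Set.indicator {p : ℝ × ℝ | 0 ≤ p.1 ∧ p.1 ≤ p.2}
      (fun p => f p.2) := by
    funext p
    simp only [uncurry, hF, Set.indicator, Set.mem_Icc, Set.mem_setOf_eq]
  have hmeas : AEStronglyMeasurable (uncurry F) (volume.prod volume) := by
    rw [huncurry]
    exact (hf.aestronglyMeasurable.comp_snd).indicator hset
  have hvol : ∀ z : ℝ, (volume (Set.Icc (0:ℝ) z)).toReal = max z 0 := by
    intro z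
    rw [Real.volume_Icc, ENNReal.toReal_ofReal', sub_zero]
  have hFint : Integrable (uncurry F) (volume.prod volume) := by
    rw [integrable_prod_iff' hmeas]
    constructor
    · refine Filter.Eventually.of_forall fun z => ?_
      have : (fun x => uncurry F (x, z)) = (Set.Icc (0:ℝ) z).indicator (fun _ => f z) := rfl
      rw [this, integrable_indicator_iff measurableSet_Icc]
      exact integrableOn_const measure_Icc_lt_top.ne
    · have heq : (fun z => ∫ x, ‖uncurry F (x, z)‖) = fun z => max z 0 * ‖f z‖ := by
        funext z
        have : (fun x => ‖uncurry F (x, z)‖)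
            = (Set.Icc (0:ℝ) z).indicator (fun _ => ‖f z‖) := by
          funext x
          simp only [uncurry, hF, Set.indicator]
          split <;> simp
        rw [this, integral_indicator_const _ measurableSet_Icc, measureReal_def, hvol, smul_eq_mul]
      rw [heq]
      refine hzf.norm.mono ?_ ?_
      · exact ((measurable_id.max measurable_const).aestronglyMeasurable.mul
          hf.norm.aestronglyMeasurable)
      · refine Filter.Eventually.of_forall fun z => ?_
        simp only [Real.norm_eq_abs, abs_mul, abs_abs]
        have h1 : |max z 0| ≤ |z| := by
          rcases le_total z 0 with h | h
          · rw [max_eq_right h]; simp [abs_nonneg]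
          · rw [max_eq_left h]
        exact mul_le_mul_of_nonneg_right h1 (abs_nonneg _)
  have hswap := integral_integral_swap hFint
  have hL : (∫ x, ∫ z, F x z) = ∫ x in Set.Ici (0:ℝ), (∫ z in Set.Ici x, f z) := by
    rw [← integral_indicator measurableSet_Ici]
    congr 1
    funext x
    by_cases hx : 0 ≤ x
    · rw [Set.indicator_of_mem (Set.mem_Ici.2 hx), ← integral_indicator measurableSet_Ici]
      congr 1
      funext z
      simp only [hF, Set.indicator, Set.mem_Icc, Set.mem_Ici, hx, true_and]
    · rw [Set.indicator_of_notMem (fun h => hx (Set.mem_Ici.1 h))]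
      have : (fun z => F x z) = fun _ => (0:ℝ) := by
        funext z
        simp only [hF, Set.indicator, Set.mem_Icc]
        simp [hx]
      rw [this, integral_zero]
  have hR : (∫ z, ∫ x, F x z) = ∫ z, max z 0 * f z := by
    congr 1
    funext z
    rw [show (fun x => F x z) = (Set.Icc (0:ℝ) z).indicator (fun _ => f z) from rfl,
      integral_indicator_const _ measurableSet_Icc, measureReal_def, hvol, smul_eq_mul]
  rw [← hL, hswap, hR]


/-- If `S(x) = ∫_{x₁}^{x} (m₁ - z) π(z) dz` is integrable on `(x₁, x₂)`
(the lower limit `x₁` is expressed via `Iio x` and integrals over `(x₁, x₂)` over all of `ℝ`,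
since `π` vanishes outside `(x₁, x₂)` and consequently so does `S`), then
`∫_{x₁}^{x₂} S(x) dx = m₂ - m₁²`; consequently the `π`-weighted average of the optimal
variance function `σ²(x)/2 = (λ₁/π(x)) S(x)`, with `λ₁ = σ̂²/(2(m₂ - m₁²))`,
equals `σ̂²/2`. -/
theorem statement9
    (x₁ x₂ : EReal) (hx : x₁ < x₂)
    (I : Set ℝ) (hI : I = {x : ℝ | x₁ < (x : EReal) ∧ (x : EReal) < x₂})
    (ρ : ℝ → ℝ)
    (hρcont : ContinuousOn ρ I)
    (hρpos : ∀ x ∈ I, 0 < ρ x)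
    (hρzero : ∀ x ∉ I, ρ x = 0)
    (hρint : Integrable ρ)
    (hρnorm : (∫ x, ρ x) = 1)
    (hint1 : Integrable fun x => x * ρ x)
    (hint2 : Integrable fun x => x ^ 2 * ρ x)
    (m₁ m₂ : ℝ)
    (hm₁ : m₁ = ∫ x, x * ρ x)
    (hm₂ : m₂ = ∫ x, x ^ 2 * ρ x)
    (hvar : 0 < m₂ - m₁ ^ 2)
    (avg : ℝ) (havgpos : 0 < avg)
    (lam : ℝ) (hlam : lam = avg / (m₂ - m₁ ^ 2))
    (S : ℝ → ℝ) (hS : ∀ x, S x = ∫ z in Set.Iio x, (m₁ - z) * ρ z)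
    (hSint : Integrable S)
    (V : ℝ → ℝ) (hV : ∀ x, V x = lam / ρ x * S x) :
    (∫ x, S x) = m₂ - m₁ ^ 2 ∧ (∫ x, V x * ρ x) = avg := by
  set f : ℝ → ℝ := fun z => (m₁ - z) * ρ z with hfdef
  have hfeq : f = fun z => m₁ * ρ z - z * ρ z := by funext z; simp only [hfdef]; ring
  have hfint : Integrable f := by rw [hfeq]; exact (hρint.const_mul m₁).sub hint1
  have hzfeq : (fun z => z * f z) = fun z => m₁ * (z * ρ z) - z ^ 2 * ρ z := by
    funext z; simp only [hfdef]; ring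
  have hzfint : Integrable (fun z => z * f z) := by
    rw [hzfeq]; exact (hint1.const_mul m₁).sub hint2
  have hintf : (∫ z, f z) = 0 := by
    rw [hfeq, integral_sub (hρint.const_mul m₁) hint1, integral_const_mul, hρnorm, ← hm₁]
    ring
  have hintzf : (∫ z, z * f z) = m₁ ^ 2 - m₂ := by
    rw [hzfeq, integral_sub (hint1.const_mul m₁) hint2, integral_const_mul, ← hm₁, ← hm₂]
    ring
  -- S x = - ∫ z in Ici x, f z
  have hS' : ∀ x, S x = -∫ z in Set.Ici x, f z := by
    intro x
    have h := integral_add_compl (measurableSet_Iio (a := x)) hfint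
    rw [compl_Iio] at h
    have := hS x
    rw [hintf] at h
    linarith [this, h]
  have hfirst : (∫ x, S x) = m₂ - m₁ ^ 2 := by
    have hsplit := integral_add_compl (measurableSet_Iio (a := (0:ℝ))) hSint
    rw [compl_Iio] at hsplit
    have h1 : (∫ x in Set.Iio (0:ℝ), S x) = ∫ z, max (-z) 0 * f z := by
      rw [setIntegral_congr_fun measurableSet_Iio (fun x _ => hS x)]
      exact left_half f hfint hzfint
    have h2 : (∫ x in Set.Ici (0:ℝ), S x) = -∫ z, max z 0 * f z := by
      rw [setIntegral_congr_fun measurableSet_Ici (fun x _ => hS' x), integral_neg]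
      rw [right_half f hfint hzfint]
    have hi1 : Integrable (fun z => max (-z) 0 * f z) := by
      refine hzfint.mono ?_ (Filter.Eventually.of_forall fun z => ?_)
      · exact ((measurable_neg.max measurable_const).aestronglyMeasurable.mul
          hfint.aestronglyMeasurable)
      · simp only [Real.norm_eq_abs, abs_mul]
        have h1 : |max (-z) 0| ≤ |z| := by
          rcases le_total z 0 with h | h
          · rw [max_eq_left (by linarith)]; simp
          · rw [max_eq_right (by linarith)]; simp [abs_nonneg]
        exact mul_le_mul_of_nonneg_right h1 (abs_nonneg _)
    have hi2 : Integrable (fun z => max z 0 * f z) := by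
      refine hzfint.mono ?_ (Filter.Eventually.of_forall fun z => ?_)
      · exact ((measurable_id.max measurable_const).aestronglyMeasurable.mul
          hfint.aestronglyMeasurable)
      · simp only [Real.norm_eq_abs, abs_mul]
        have h1 : |max z 0| ≤ |z| := by
          rcases le_total z 0 with h | h
          · rw [max_eq_right h]; simp [abs_nonneg]
          · rw [max_eq_left h]
        exact mul_le_mul_of_nonneg_right h1 (abs_nonneg _)
    have hcomb : (∫ z, max (-z) 0 * f z) - (∫ z, max z 0 * f z) = ∫ z, -z * f z := by
      rw [← integral_sub hi1 hi2]
      congr 1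
      funext z
      have : max (-z) 0 - max z 0 = -z := by
        rcases le_total z 0 with h | h
        · rw [max_eq_left (by linarith), max_eq_right h]; ring
        · rw [max_eq_right (by linarith), max_eq_left h]; ring
      rw [← sub_mul, this]
    have hneg : (∫ z, -z * f z) = m₂ - m₁ ^ 2 := by
      have : (fun z => -z * f z) = fun z => -(z * f z) := by funext z; ring
      rw [this, integral_neg, hintzf]; ring
    rw [← hsplit, h1, h2, ← hneg, ← hcomb]
    ring
  refine ⟨hfirst, ?_⟩
  -- S vanishes outside I
  have hSoff : ∀ x ∉ I, S x = 0 := by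
    intro x hxI
    rw [hI, Set.mem_setOf_eq, not_and_or] at hxI
    rcases hxI with h | h
    · push_neg at h
      rw [hS x]
      refine setIntegral_eq_zero_of_forall_eq_zero fun z hz => ?_
      have hzI : z ∉ I := by
        rw [hI, Set.mem_setOf_eq, not_and_or]
        left
        push_neg
        calc (z : EReal) ≤ (x : EReal) := by exact_mod_cast le_of_lt hz
        _ ≤ x₁ := h
      show (m₁ - z) * ρ z = 0
      rw [hρzero z hzI, mul_zero]
    · push_neg at h
      rw [hS' x, neg_eq_zero]
      refine setIntegral_eq_zero_of_forall_eq_zero fun z hz => ?_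
      have hzI : z ∉ I := by
        rw [hI, Set.mem_setOf_eq, not_and_or]
        right
        push_neg
        calc x₂ ≤ (x : EReal) := h
        _ ≤ (z : EReal) := by exact_mod_cast hz
      show (m₁ - z) * ρ z = 0
      rw [hρzero z hzI, mul_zero]
  have hVρ : ∀ x, V x * ρ x = lam * S x := by
    intro x
    by_cases hxI : x ∈ I
    · have hne : ρ x ≠ 0 := (hρpos x hxI).ne'
      rw [hV x]
      field_simp
    · rw [hV x, hρzero x hxI, hSoff x hxI]
      simp
  have : (∫ x, V x * ρ x) = ∫ x, lam * S x := by
    congr 1; funext x; exact hVρ x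
  rw [this, integral_const_mul, hfirst, hlam, div_mul_cancel₀ _ hvar.ne']
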